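/- Let β: {1,2,3,…} → ℝ satisfy β(n) ≥ 0 for all n, β(1) ≤ 1, and k·β(n−1+k) ≤ β(n) for all integers n ≥ 1 and k ≥ 1. Then β(n) ≤ 1/2^{n−1} for all n ≥ 1, and hence n·β(n) ≤ n/2^{n−1}. -/
import Mathlib


/-- Core inequality for Sybil-proof cake cutting: if `β(n) ≥ 0`, `β(1) ≤ 1`, and
`k·β(n−1+k) ≤ β(n)` for all `n, k ≥ 1`, then `β(n) ≤ 1/2^{n−1}` and hence
`n·β(n) ≤ n/2^{n−1}` for all `n ≥ 1`. -/
theorem stmt_8 (β : ℕ → ℝ) (hpos : ∀ n : ℕ, 1 ≤ n → 0 ≤ β n) (h1 : β 1 ≤ 1)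
    (hsp : ∀ n k : ℕ, 1 ≤ n → 1 ≤ k → (k : ℝ) * β (n - 1 + k) ≤ β n) :
    ∀ n : ℕ, 1 ≤ n →
      β n ≤ 1 / 2 ^ (n - 1) ∧ (n : ℝ) * β n ≤ (n : ℝ) / 2 ^ (n - 1) := by
  have key : ∀ n : ℕ, 1 ≤ n → β n ≤ 1 / 2 ^ (n - 1) := by
    intro n hn
    induction n with
    | zero => omega
    | succ m ih =>
      rcases Nat.eq_or_lt_of_le hn with h | h
      · have hm0 : m = 0 := by omega
        subst hm0; simpa using h1
      · have hm : 1 ≤ m := by omega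
        have h2 := hsp m 2 hm (by norm_num)
        have : m - 1 + 2 = m + 1 := by omega
        rw [this] at h2
        have ihm := ih hm
        have : (2:ℝ) * β (m + 1) ≤ 1 / 2 ^ (m - 1) := le_trans h2 ihm
        have hpow : (2:ℝ) ^ (m + 1 - 1) = 2 * 2 ^ (m - 1) := by
          rw [show m + 1 - 1 = (m - 1) + 1 by omega]; ring
        have hp : (0:ℝ) < 2 ^ (m-1) := by positivity
        rw [hpow, le_div_iff₀ (by positivity)]
        rw [le_div_iff₀ hp] at this
        nlinarith
  intro n hn
  refine ⟨key n hn, ?_⟩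
  have := key n hn
  have hn0 : (0:ℝ) ≤ n := Nat.cast_nonneg n
  calc (n:ℝ) * β n ≤ (n:ℝ) * (1 / 2 ^ (n-1)) := by
        exact mul_le_mul_of_nonneg_left this hn0
    _ = (n:ℝ) / 2 ^ (n-1) := by ring
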